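/- For the margin-δ robust two-agent mechanism design LP with invertible belief matrix B, probability vector q with γ = max_x q_x < 1, cost c > 0 and margin δ ≥ 0, the optimal worst-case payment κ* satisfies c + δ ≤ κ* ≤ ‖B⁻¹‖₂ · ( c(γ|Y| + 1)/(1-γ) + δ((1+γ)|Y| + 2)/(1-γ) ). -/

import Mathlib

open Matrix BigOperators

/-- Bounds on the optimal worst-case payment `κ*` of the margin-`δ` robust
two-agent mechanism design LP.  Here `nB` is (an upper bound attaining)
`‖B⁻¹‖₂`, expressed via the Euclidean operator-norm characterization, and
`dvec` is the reference agent's marginal, `dᵀ = ∑ x q x • B x ·`.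
Every feasible worst-case payment is at least `c + δ`, and there is a feasible
mechanism whose worst-case payment is at most
`nB * (c(γd+1)/(1-γ) + δ((1+γ)d+2)/(1-γ))`; hence the optimum `κ*` lies
between these two values. -/
theorem stmt6 (d : ℕ) (hd : 0 < d) (B : Matrix (Fin d) (Fin d) ℝ)
    (hB_nonneg : ∀ x y, 0 ≤ B x y) (hB_row : ∀ x, ∑ y, B x y = 1)
    (hB_inv : IsUnit B.det)
    (q : Fin d → ℝ) (hq_nonneg : ∀ x, 0 ≤ q x) (hq_sum : ∑ x, q x = 1)
    (γ : ℝ) (hγ : ∀ x, q x ≤ γ) (hγ1 : γ < 1)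
    (c δ : ℝ) (hc : 0 < c) (hδ : 0 ≤ δ)
    (nB : ℝ)
    (hnB : ∀ v : Fin d → ℝ,
      Real.sqrt (∑ x, ((B⁻¹).mulVec v x) ^ 2) ≤ nB * Real.sqrt (∑ x, (v x) ^ 2))
    (feasible : ℝ → Prop)
    (hfeasible : ∀ κ, feasible κ ↔
      ∃ R : Matrix (Fin d) (Fin d) ℝ,
        (∀ x y, |R x y| ≤ κ) ∧
        (∀ x, c + δ ≤ (B * Rᵀ) x x) ∧
        (∀ x y, x ≠ y → (B * Rᵀ) x y ≤ c - δ) ∧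
        (∀ x, (∑ y, R x y * ∑ x', q x' * B x' y) ≤ -δ))
    (κstar : ℝ) (hκstar : IsLeast {κ | feasible κ} κstar) :
    c + δ ≤ κstar ∧
    κstar ≤ nB * (c * (γ * d + 1) / (1 - γ) + δ * ((1 + γ) * d + 2) / (1 - γ)) := by
  have hd1 : (1:ℝ) ≤ (d:ℝ) := by exact_mod_cast hd
  have x0 : Fin d := ⟨0, hd⟩
  have hγ0 : 0 ≤ γ := le_trans (hq_nonneg x0) (hγ x0)
  have h1γ : (0:ℝ) < 1 - γ := by linarith
  constructor
  · -- lower bound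
    obtain ⟨R, hR1, hR2, hR3, hR4⟩ := (hfeasible κstar).mp hκstar.1
    have hle : (B * Rᵀ) x0 x0 ≤ κstar := by
      have hrw : (B * Rᵀ) x0 x0 = ∑ y, B x0 y * R x0 y := by
        simp [Matrix.mul_apply, Matrix.transpose_apply]
      rw [hrw]
      calc ∑ y, B x0 y * R x0 y ≤ ∑ y, B x0 y * κstar := by
            apply Finset.sum_le_sum
            intro y _
            exact mul_le_mul_of_nonneg_left ((abs_le.mp (hR1 x0 y)).2) (hB_nonneg x0 y)
        _ = κstar := by rw [← Finset.sum_mul, hB_row x0, one_mul]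
    linarith [hR2 x0]
  · -- upper bound
    set a : ℝ := c + δ with ha_def
    set b : ℝ := -(δ + γ * (c + δ)) / (1 - γ) with hb_def
    have ha0 : 0 ≤ a := by rw [ha_def]; linarith
    have hb0 : b ≤ 0 := by
      rw [hb_def]
      apply div_nonpos_of_nonpos_of_nonneg
      · nlinarith [mul_nonneg hγ0 (by linarith : (0:ℝ) ≤ c + δ)]
      · linarith
    have hb : b * (1 - γ) = -(δ + γ * (c + δ)) := by
      rw [hb_def]; field_simp
    set A : Matrix (Fin d) (Fin d) ℝ := fun z x => if z = x then a else b with hA_def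
    have hBA : B * (B⁻¹ * A) = A := by
      rw [← Matrix.mul_assoc, Matrix.mul_nonsing_inv B hB_inv, Matrix.one_mul]
    set R : Matrix (Fin d) (Fin d) ℝ := (B⁻¹ * A)ᵀ with hR_def
    have hBR : B * Rᵀ = A := by rw [hR_def, Matrix.transpose_transpose, hBA]
    have hnB0 : 0 ≤ nB := by
      have h := hnB (fun z => if z = x0 then 1 else 0)
      have h1 : (∑ z, ((if z = x0 then (1:ℝ) else 0)) ^ 2) = 1 := by
        rw [Finset.sum_congr rfl (fun z _ => by split_ifs <;> norm_num :
          ∀ z ∈ Finset.univ, ((if z = x0 then (1:ℝ) else 0)) ^ 2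
            = if z = x0 then (1:ℝ) else 0)]
        simp
      rw [h1, Real.sqrt_one, mul_one] at h
      exact le_trans (Real.sqrt_nonneg _) h
    -- key bound on entries
    have hmain : a - (d:ℝ) * b ≤ c * (γ * d + 1) / (1 - γ) + δ * ((1 + γ) * d + 2) / (1 - γ) := by
      rw [← add_div, le_div_iff₀ h1γ]
      have expand : (a - (d:ℝ) * b) * (1 - γ) = a * (1 - γ) - (d:ℝ) * (b * (1 - γ)) := by ring
      rw [expand, hb, ha_def]
      nlinarith [mul_nonneg hγ0 hc.le, mul_nonneg hγ0 hδ, hδ,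
        mul_nonneg (by linarith : (0:ℝ) ≤ (d:ℝ)) hδ]
    apply hκstar.2
    show feasible _
    rw [hfeasible]
    refine ⟨R, ?_, ?_, ?_, ?_⟩
    · -- entry bound
      intro x y
      have hRxy : R x y = (B⁻¹).mulVec (fun z => A z x) y := by
        simp only [hR_def, Matrix.transpose_apply, Matrix.mul_apply, Matrix.mulVec, dotProduct]
      have hcoord : |R x y| ≤ Real.sqrt (∑ z, ((B⁻¹).mulVec (fun z => A z x) z) ^ 2) := by
        rw [hRxy, ← Real.sqrt_sq_eq_abs]
        exact Real.sqrt_le_sqrt (Finset.single_le_sum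
          (f := fun z => ((B⁻¹).mulVec (fun z => A z x) z) ^ 2)
          (fun z _ => sq_nonneg _) (Finset.mem_univ y))
      have hsumv : (∑ z, (A z x) ^ 2) = a ^ 2 + ((d:ℝ) - 1) * b ^ 2 := by
        rw [← Finset.add_sum_erase Finset.univ _ (Finset.mem_univ x)]
        have h1 : A x x = a := by simp [hA_def]
        have h2 : ∑ z ∈ Finset.univ.erase x, (A z x) ^ 2
            = ∑ _z ∈ Finset.univ.erase x, b ^ 2 := by
          refine Finset.sum_congr rfl (fun z hz => ?_)
          have hzx : z ≠ x := Finset.ne_of_mem_erase hz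
          simp [hA_def, hzx]
        rw [h1, h2, Finset.sum_const, Finset.card_erase_of_mem (Finset.mem_univ x),
          Finset.card_univ, Fintype.card_fin, nsmul_eq_mul, Nat.cast_sub hd, Nat.cast_one]
      have hnorm : Real.sqrt (∑ z, (A z x) ^ 2) ≤ a - (d:ℝ) * b := by
        have hsq : (∑ z, (A z x) ^ 2) ≤ (a - (d:ℝ) * b) ^ 2 := by
          rw [hsumv]
          nlinarith [mul_nonneg ha0 (mul_nonneg (by linarith : (0:ℝ) ≤ (d:ℝ)) (neg_nonneg.mpr hb0)),
            sq_nonneg b, mul_nonneg (mul_nonneg (by linarith : (0:ℝ) ≤ (d:ℝ) - 1) (by linarith : (0:ℝ) ≤ (d:ℝ))) (sq_nonneg b)]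
        calc Real.sqrt (∑ z, (A z x) ^ 2) ≤ Real.sqrt ((a - (d:ℝ) * b) ^ 2) :=
              Real.sqrt_le_sqrt hsq
          _ = a - (d:ℝ) * b := by
              rw [Real.sqrt_sq (by nlinarith [mul_nonneg (by linarith : (0:ℝ) ≤ (d:ℝ)) (neg_nonneg.mpr hb0)])]
      calc |R x y| ≤ Real.sqrt (∑ z, ((B⁻¹).mulVec (fun z => A z x) z) ^ 2) := hcoord
        _ ≤ nB * Real.sqrt (∑ z, (A z x) ^ 2) := hnB _
        _ ≤ nB * (a - (d:ℝ) * b) := by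
            exact mul_le_mul_of_nonneg_left hnorm hnB0
        _ ≤ nB * (c * (γ * d + 1) / (1 - γ) + δ * ((1 + γ) * d + 2) / (1 - γ)) :=
            mul_le_mul_of_nonneg_left hmain hnB0
    · -- diagonal
      intro x
      rw [hBR]
      simp [hA_def]
    · -- off diagonal
      intro x y hxy
      rw [hBR]
      have : A x y = b := by simp [hA_def, hxy]
      rw [this, hb_def, div_le_iff₀ h1γ]
      nlinarith [mul_nonneg hγ0 hδ, mul_nonneg hγ0 hc.le, hδ, hc.le]
    · -- marginal constraint
      intro x
      have key : (∑ y, R x y * ∑ x', q x' * B x' y) = ∑ x', q x' * A x' x := by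
        calc (∑ y, R x y * ∑ x', q x' * B x' y)
            = ∑ y, ∑ x', (B⁻¹ * A) y x * (q x' * B x' y) := by
              refine Finset.sum_congr rfl (fun y _ => ?_)
              rw [hR_def, Matrix.transpose_apply, Finset.mul_sum]
          _ = ∑ x', ∑ y, (B⁻¹ * A) y x * (q x' * B x' y) := Finset.sum_comm
          _ = ∑ x', q x' * ∑ y, B x' y * (B⁻¹ * A) y x := by
              refine Finset.sum_congr rfl (fun x' _ => ?_)
              rw [Finset.mul_sum]
              exact Finset.sum_congr rfl (fun y _ => by ring)
          _ = ∑ x', q x' * A x' x := by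
              refine Finset.sum_congr rfl (fun x' _ => ?_)
              rw [← Matrix.mul_apply, hBA]
      rw [key]
      have hsplit : (∑ x', q x' * A x' x) = q x * a + (1 - q x) * b := by
        rw [← Finset.add_sum_erase Finset.univ _ (Finset.mem_univ x)]
        have h1 : A x x = a := by simp [hA_def]
        have h2 : ∑ x' ∈ Finset.univ.erase x, q x' * A x' x
            = (∑ x' ∈ Finset.univ.erase x, q x') * b := by
          rw [Finset.sum_mul]
          refine Finset.sum_congr rfl (fun z hz => ?_)
          have hzx : z ≠ x := Finset.ne_of_mem_erase hz
          simp [hA_def, hzx]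
        have h3 : (∑ x' ∈ Finset.univ.erase x, q x') = 1 - q x := by
          have := Finset.add_sum_erase Finset.univ q (Finset.mem_univ x)
          rw [hq_sum] at this
          linarith
        rw [h1, h2, h3]
      rw [hsplit]
      have h2 : 0 ≤ (γ - q x) * ((c + δ) - b) := by
        apply mul_nonneg (by linarith [hγ x])
        have : b ≤ c + δ := le_trans hb0 (by linarith)
        linarith
      rw [ha_def]
      nlinarith [h2, hb]
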